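/- If K is a linear subspace of V₀ and ρ: ℝ^S → ℝ^S/K is the quotient map, then the restriction of ρ to Λ_K is injective. -/
import Mathlib


open scoped BigOperators

noncomputable section

/-- The simplex of probability distributions on `S`. -/
def Delta (S : Type*) [Fintype S] : Set (S → ℝ) :=
  {μ | (∀ s, 0 ≤ μ s) ∧ ∑ s, μ s = 1}

/-- The (relative) interior of the simplex: strictly positive distributions. -/
def intDelta (S : Type*) [Fintype S] : Set (S → ℝ) :=
  {μ | (∀ s, 0 < μ s) ∧ ∑ s, μ s = 1}

/-- The hyperplane of vectors with coordinate sum zero. -/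
def V0 (S : Type*) [Fintype S] : Set (S → ℝ) :=
  {v | ∑ s, v s = 0}

/-- The set `λ_κ` of distributions satisfying the centrality equation of `κ`
(real powers, `rpow`, so `0 ^ x = 0` for `x > 0`). -/
def lam {S : Type*} [Fintype S] (κ : S → ℝ) : Set (S → ℝ) :=
  {μ ∈ Delta S |
    ∏ s ∈ Finset.univ.filter (fun s => 0 < κ s), (μ s) ^ (κ s) =
    ∏ s ∈ Finset.univ.filter (fun s => κ s < 0), (μ s) ^ (-(κ s))}

/-- `Λ_K`, the intersection of the `λ_κ` over `κ ∈ K`. -/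
def Lam {S : Type*} [Fintype S] (K : Set (S → ℝ)) : Set (S → ℝ) :=
  ⋂ κ ∈ K, lam κ

private lemma prod_lt_prod_aux {S : Type*} (T : Finset S) (hT : T.Nonempty)
    (f g : S → ℝ) (hg : ∀ s ∈ T, 0 ≤ g s) (hlt : ∀ s ∈ T, g s < f s) :
    ∏ s ∈ T, g s < ∏ s ∈ T, f s := by
  classical
  obtain ⟨s₀, hs₀⟩ := hT
  have hf : ∀ s ∈ T, 0 < f s := fun s hs => lt_of_le_of_lt (hg s hs) (hlt s hs)
  have h1 : ∏ s ∈ T.erase s₀, g s ≤ ∏ s ∈ T.erase s₀, f s :=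
    Finset.prod_le_prod (fun s hs => hg s (Finset.mem_of_mem_erase hs))
      (fun s hs => (hlt s (Finset.mem_of_mem_erase hs)).le)
  have h2 : 0 < ∏ s ∈ T.erase s₀, f s :=
    Finset.prod_pos (fun s hs => hf s (Finset.mem_of_mem_erase hs))
  calc ∏ s ∈ T, g s = g s₀ * ∏ s ∈ T.erase s₀, g s := (Finset.mul_prod_erase T g hs₀).symm
    _ ≤ g s₀ * ∏ s ∈ T.erase s₀, f s := mul_le_mul_of_nonneg_left h1 (hg s₀ hs₀)
    _ < f s₀ * ∏ s ∈ T.erase s₀, f s := mul_lt_mul_of_pos_right (hlt s₀ hs₀) h2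
    _ = ∏ s ∈ T, f s := Finset.mul_prod_erase T f hs₀

/-- if `K` is a linear subspace of `V₀` and `ρ : ℝ^S → ℝ^S/K` is the
quotient map, then the restriction of `ρ` to `Λ_K` is injective. -/
theorem quotient_map_injOn_Lam (S : Type*) [Fintype S] (K : Submodule ℝ (S → ℝ))
    (hKV : (K : Set (S → ℝ)) ⊆ V0 S) :
    Set.InjOn K.mkQ (Lam (K : Set (S → ℝ))) := by
  classical
  intro μ hμ ν hν hquot
  by_contra hne
  set κ : S → ℝ := μ - ν with hκdef
  have hκK : κ ∈ K := by
    rw [hκdef, ← Submodule.Quotient.eq]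
    simpa [Submodule.mkQ_apply] using hquot
  have hμlam : μ ∈ lam κ := by
    have := Set.mem_iInter₂.mp hμ κ hκK; exact this
  have hνlam : ν ∈ lam κ := by
    have := Set.mem_iInter₂.mp hν κ hκK; exact this
  obtain ⟨⟨hμ0, hμ1⟩, hμE⟩ := hμlam
  obtain ⟨⟨hν0, hν1⟩, hνE⟩ := hνlam
  set P : Finset S := Finset.univ.filter (fun s => 0 < κ s) with hP
  set N : Finset S := Finset.univ.filter (fun s => κ s < 0) with hN
  have hdisj : Disjoint P N := by
    rw [Finset.disjoint_left]
    intro s hsP hsN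
    rw [hP, Finset.mem_filter] at hsP
    rw [hN, Finset.mem_filter] at hsN
    exact absurd hsN.2 (not_lt.mpr hsP.2.le)
  set f : S → ℝ := fun s => if 0 < κ s then (μ s) ^ (κ s) else (ν s) ^ (-(κ s)) with hf
  set g : S → ℝ := fun s => if 0 < κ s then (ν s) ^ (κ s) else (μ s) ^ (-(κ s)) with hg
  have hfP : ∏ s ∈ P, f s = ∏ s ∈ P, (μ s) ^ (κ s) :=
    Finset.prod_congr rfl (fun s hs => by
      rw [hP, Finset.mem_filter] at hs; simp [hf, hs.2])
  have hfN : ∏ s ∈ N, f s = ∏ s ∈ N, (ν s) ^ (-(κ s)) :=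
    Finset.prod_congr rfl (fun s hs => by
      rw [hN, Finset.mem_filter] at hs; simp [hf, not_lt.mpr hs.2.le])
  have hgP : ∏ s ∈ P, g s = ∏ s ∈ P, (ν s) ^ (κ s) :=
    Finset.prod_congr rfl (fun s hs => by
      rw [hP, Finset.mem_filter] at hs; simp [hg, hs.2])
  have hgN : ∏ s ∈ N, g s = ∏ s ∈ N, (μ s) ^ (-(κ s)) :=
    Finset.prod_congr rfl (fun s hs => by
      rw [hN, Finset.mem_filter] at hs; simp [hg, not_lt.mpr hs.2.le])
  have hAB : ∏ s ∈ P ∪ N, f s = ∏ s ∈ P ∪ N, g s := by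
    rw [Finset.prod_union hdisj, Finset.prod_union hdisj, hfP, hfN, hgP, hgN,
      hμE, ← hνE, mul_comm]
  have hT : (P ∪ N).Nonempty := by
    have : ∃ s, κ s ≠ 0 := by
      by_contra h
      push_neg at h
      apply hne
      funext s
      have := h s
      rw [hκdef] at this
      simpa [sub_eq_zero] using this
    obtain ⟨s, hs⟩ := this
    refine ⟨s, Finset.mem_union.mpr ?_⟩
    rcases hs.lt_or_gt with h | h
    · exact Or.inr (by rw [hN, Finset.mem_filter]; exact ⟨Finset.mem_univ s, h⟩)
    · exact Or.inl (by rw [hP, Finset.mem_filter]; exact ⟨Finset.mem_univ s, h⟩)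
  have hgnn : ∀ s ∈ P ∪ N, 0 ≤ g s := by
    intro s _
    rw [hg]
    dsimp only
    split
    · exact Real.rpow_nonneg (hν0 s) _
    · exact Real.rpow_nonneg (hμ0 s) _
  have hlt : ∀ s ∈ P ∪ N, g s < f s := by
    intro s hs
    rcases Finset.mem_union.mp hs with h | h
    · rw [hP, Finset.mem_filter] at h
      have hk : 0 < κ s := h.2
      have hμν : ν s < μ s := by
        have : 0 < μ s - ν s := by simpa [hκdef] using hk
        linarith
      simp only [hf, hg, if_pos hk]
      exact Real.rpow_lt_rpow (hν0 s) hμν hk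
    · rw [hN, Finset.mem_filter] at h
      have hk : κ s < 0 := h.2
      have hμν : μ s < ν s := by
        have : μ s - ν s < 0 := by simpa [hκdef] using hk
        linarith
      simp only [hf, hg, if_neg (not_lt.mpr hk.le)]
      exact Real.rpow_lt_rpow (hμ0 s) hμν (by linarith)
  exact absurd hAB (ne_of_gt (prod_lt_prod_aux _ hT f g hgnn hlt))
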